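/- Let Γ be a countable group and let H ≤ Γ be a subgroup such that the left translation action of Γ on the coset space Γ/H is highly faithful, meaning: for any finite list γ₁,…,γₙ of non-identity elements of Γ there exists x ∈ Γ/H with γᵢ·x ≠ x for all i ≤ n. Then for every such γ₁,…,γₙ and every ε with 0 < ε < 1 there is a unit vector f ∈ ℓ²(Γ/H) such that |⟨γᵢ·f, f⟩| ≤ ε for each 1 ≤ i ≤ n, where Γ acts on ℓ²(Γ/H) by the quasi-regular representation (γ·f)(x) = f(γ⁻¹·x). -/

import Mathlib

open scoped ComplexConjugate

/-- If the left translation action of a countable group `Γ` on `Γ/H` is highly faithful,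
then for any non-identity elements `γ₁,…,γₙ` and `0 < ε < 1` there is a unit vector
`f ∈ ℓ²(Γ/H)` with `|⟨γᵢ·f, f⟩| ≤ ε` for all `i`, for the quasi-regular representation
`(γ·f)(x) = f(γ⁻¹·x)`. -/
theorem highlyFaithful_exists_almost_orthogonal_unit_vector
    {Γ : Type*} [Group Γ] [Countable Γ] (H : Subgroup Γ)
    (hhf : ∀ (n : ℕ) (γ : Fin n → Γ), (∀ i, γ i ≠ 1) →
      ∃ x : Γ ⧸ H, ∀ i, γ i • x ≠ x) :
    ∀ (n : ℕ) (γ : Fin n → Γ), (∀ i, γ i ≠ 1) → ∀ ε : ℝ, 0 < ε → ε < 1 →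
      ∃ f : lp (fun _ : Γ ⧸ H => ℂ) 2, ‖f‖ = 1 ∧
        ∀ i, ‖∑' x : Γ ⧸ H, f ((γ i)⁻¹ • x) * conj (f x)‖ ≤ ε := by
  intro n γ hγ ε hε hε1
  classical
  obtain ⟨x, hx⟩ := hhf n γ hγ
  set f : lp (fun _ : Γ ⧸ H => ℂ) 2 :=
    lp.single (E := fun _ : Γ ⧸ H => ℂ) 2 x (1 : ℂ) with hf
  have hp : (0:ℝ) < (2 : ENNReal).toReal := by norm_num
  refine ⟨f, ?_, ?_⟩
  · have := lp.norm_single (E := fun _ : Γ ⧸ H => ℂ) (p := 2) (by norm_num) x (1:ℂ)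
    simpa [hf] using this
  · intro i
    have hsum : (∑' y : Γ ⧸ H, f ((γ i)⁻¹ • y) * conj (f y)) = 0 := by
      rw [tsum_eq_single x]
      · have h1 : (γ i)⁻¹ • x ≠ x := by
          intro h
          apply hx i
          nth_rewrite 1 [← h]
          simp
        rw [hf, lp.single_apply_ne 2 x _ h1, zero_mul]
      · intro y hy
        rw [hf, lp.single_apply_ne 2 x _ hy]
        simp
    rw [hsum]
    simpa using hε.le
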